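/- Let p be a prime and let K be a field with a nontrivial nonarchimedean multiplicative norm ‖·‖ : K → ℝ≥0. Assume: (i) K is spherically complete (every chain of closed balls in K has nonempty intersection); (ii) the value group of K is p-divisible, i.e. for every nonzero x ∈ K there is y ∈ K with ‖y‖^p = ‖x‖; (iii) the residue field of K is perfect and of characteristic p, i.e. ‖p·1_K‖ < 1 and for every a ∈ K with ‖a‖ ≤ 1 there exists b ∈ K with ‖b‖ ≤ 1 and ‖a − b^p‖ < 1. Let ϖ ∈ K satisfy 0 < ‖ϖ‖ < 1 and ‖p·1_K‖ ≤ ‖ϖ‖^p. Then the p-power (Frobenius) map from K°/ϖK° to K°/ϖ^p K° is surjective; concretely, for every y ∈ K with ‖y‖ ≤ 1 there exists x ∈ K with ‖x‖ ≤ 1 and ‖y − x^p‖ ≤ ‖ϖ‖^p. -/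

import Mathlib

section aux
variable {K : Type*} [Field K] (v : Valuation K NNReal)

lemma v_natCast_le_one (n : ℕ) : v (n : K) ≤ 1 := by
  induction n with
  | zero => simp
  | succ n ih =>
    push_cast
    exact le_trans (v.map_add _ _) (max_le ih (le_of_eq v.map_one))

lemma v_pow_diff {p : ℕ} (hp : p.Prime) (x d : K) (hx : v x ≤ 1) (hd : v d ≤ 1) :
    v ((x + d) ^ p - x ^ p - d ^ p) ≤ v (p : K) := by
  have h : (x + d) ^ p - x ^ p - d ^ p
      = (p : K) * ∑ k ∈ Finset.Ioo 0 p, x ^ k * d ^ (p - k) * ↑(p.choose k / p) := by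
    rw [add_pow_prime_eq hp]
    have hterm : ∀ k ∈ Finset.Ioo 0 p, x * d * (x ^ (k - 1) * d ^ (p - k - 1) * ↑(p.choose k / p))
        = x ^ k * d ^ (p - k) * ↑(p.choose k / p) := by
      intro k hk
      obtain ⟨hk1, hk2⟩ := Finset.mem_Ioo.mp hk
      obtain ⟨a, rfl⟩ : ∃ a, k = a + 1 := ⟨k - 1, by omega⟩
      obtain ⟨b, hb⟩ : ∃ b, p - (a + 1) = b + 1 := ⟨p - (a + 1) - 1, by omega⟩
      rw [hb]; simp only [Nat.add_sub_cancel]; ring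
    rw [← Finset.sum_congr rfl hterm, ← Finset.mul_sum]; ring
  rw [h, v.map_mul]
  have hs : v (∑ k ∈ Finset.Ioo 0 p, x ^ k * d ^ (p - k) * ↑(p.choose k / p)) ≤ 1 := by
    apply Valuation.map_sum_le
    intro i _
    rw [v.map_mul, v.map_mul, v.map_pow, v.map_pow]
    exact mul_le_one' (mul_le_one' (pow_le_one' hx _) (pow_le_one' hd _)) (v_natCast_le_one v _)
  calc v (p : K) * v (∑ k ∈ Finset.Ioo 0 p, x ^ k * d ^ (p - k) * ↑(p.choose k / p))
      ≤ v (p : K) * 1 := mul_le_mul_right hs _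
    _ = v (p : K) := mul_one _

end aux

/-- `K` is spherically complete: every family of closed balls that is totally ordered by
inclusion has nonempty intersection. -/
def SphericallyComplete {K : Type*} [Field K] (v : Valuation K NNReal) : Prop :=
  ∀ 𝒞 : Set (Set K), (∀ B ∈ 𝒞, ∃ (c : K) (r : NNReal), B = {x : K | v (x - c) ≤ r}) →
    IsChain (· ⊆ ·) 𝒞 → (⋂₀ 𝒞).Nonempty

/-- Let `p` be a prime and `K` a spherically complete field with a nontrivial
nonarchimedean multiplicative norm `v`, whose value group is `p`-divisible and whose
residue field is perfect of characteristic `p`.  Let `ϖ` satisfy `0 < v ϖ < 1` and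
`v p ≤ (v ϖ)^p`.  Then the Frobenius `K°/ϖ → K°/ϖ^p` is surjective: for every `y` with
`v y ≤ 1` there is `x` with `v x ≤ 1` and `v (y - x^p) ≤ (v ϖ)^p`. -/
theorem frobenius_surjective_of_sphericallyComplete (p : ℕ) (hp : p.Prime)
    (K : Type*) [Field K] (v : Valuation K NNReal)
    (hnt : ∃ x : K, x ≠ 0 ∧ v x ≠ 1)
    (hsc : SphericallyComplete v)
    (hdiv : ∀ x : K, x ≠ 0 → ∃ y : K, (v y) ^ p = v x)
    (hcharp : v (p : K) < 1)
    (hperf : ∀ a : K, v a ≤ 1 → ∃ b : K, v b ≤ 1 ∧ v (a - b ^ p) < 1)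
    (ϖ : K) (hϖ0 : 0 < v ϖ) (hϖ1 : v ϖ < 1) (hϖp : v (p : K) ≤ (v ϖ) ^ p) :
    ∀ y : K, v y ≤ 1 → ∃ x : K, v x ≤ 1 ∧ v (y - x ^ p) ≤ (v ϖ) ^ p := by
  intro y hy
  by_contra hcon
  push_neg at hcon
  have hp0 : p ≠ 0 := hp.ne_zero
  have hϖpos : 0 < (v ϖ) ^ p := pow_pos hϖ0 p
  set α := {x : K // v x ≤ 1} with hα
  set r : α → NNReal := fun x => v (y - x.1 ^ p) with hrdef
  have hrlt : ∀ x : α, (v ϖ) ^ p < r x := fun x => hcon x.1 x.2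
  have hrpos : ∀ x : α, 0 < r x := fun x => hϖpos.trans (hrlt x)
  have hr1 : ∀ x : α, r x ≤ 1 := by
    intro x
    refine le_trans (v.map_sub _ _) (max_le hy ?_)
    rw [v.map_pow]; exact pow_le_one' x.2 _
  set ρ : α → NNReal := fun x => (r x) ^ ((p : ℝ)⁻¹) with hρdef
  have hρp : ∀ x : α, (ρ x) ^ p = r x := fun x => NNReal.rpow_inv_natCast_pow _ hp0
  have hρ1 : ∀ x : α, ρ x ≤ 1 := by
    intro x
    by_contra h
    push_neg at h
    exact absurd (hρp x ▸ one_lt_pow₀ h hp0) (not_lt.2 (hr1 x))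
  have hρmono : ∀ x x' : α, r x' ≤ r x → ρ x' ≤ ρ x := fun x x' h =>
    NNReal.rpow_le_rpow h (by positivity)
  -- key: points in the ball around x have error ≤ r x
  have key : ∀ x x' : α, v (x'.1 - x.1) ≤ ρ x → r x' ≤ r x := by
    intro x x' hd
    have hd1 : v (x'.1 - x.1) ≤ 1 := hd.trans (hρ1 x)
    have hx' : x'.1 = x.1 + (x'.1 - x.1) := by ring
    have heq : y - x'.1 ^ p
        = (y - x.1 ^ p) - ((x.1 + (x'.1 - x.1)) ^ p - x.1 ^ p - (x'.1 - x.1) ^ p)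
          - (x'.1 - x.1) ^ p := by
      rw [← hx']; ring
    calc r x' = v (y - x'.1 ^ p) := rfl
      _ ≤ max (max (v (y - x.1 ^ p))
            (v ((x.1 + (x'.1 - x.1)) ^ p - x.1 ^ p - (x'.1 - x.1) ^ p)))
            (v ((x'.1 - x.1) ^ p)) := by
          rw [heq]
          exact le_trans (v.map_sub _ _) (max_le_max (v.map_sub _ _) le_rfl)
      _ ≤ r x := by
          apply max_le (max_le le_rfl _) _
          · exact le_trans (v_pow_diff v hp _ _ x.2 hd1) (hϖp.trans (hrlt x).le)
          · rw [v.map_pow]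
            exact le_trans (pow_le_pow_left' hd p) (le_of_eq (hρp x))
  -- improvement step
  have improve : ∀ x : α, ∃ x' : α, v (x'.1 - x.1) ≤ ρ x ∧ r x' < r x := by
    intro x
    have hne : y - x.1 ^ p ≠ 0 := fun h => by
      have := hrpos x
      rw [hrdef] at this
      simp only [h, v.map_zero] at this
      exact lt_irrefl _ this
    obtain ⟨t, ht⟩ := hdiv _ hne
    have hvt : v t = ρ x := by
      have h2 : ρ x = (v (y - x.1 ^ p)) ^ ((p : ℝ)⁻¹) := rfl
      rw [h2, ← ht, ← NNReal.rpow_natCast (v t) p, ← NNReal.rpow_mul,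
        mul_inv_cancel₀ (by exact_mod_cast hp0 : (p : ℝ) ≠ 0), NNReal.rpow_one]
    have htpos : 0 < v t := by
      rw [pos_iff_ne_zero]
      intro h
      rw [h, zero_pow hp0] at ht
      exact (hrpos x).ne' ht.symm
    have htne : t ≠ 0 := fun h => by simp [h] at htpos
    set z := (y - x.1 ^ p) / t ^ p with hz
    have hvz : v z = 1 := by
      rw [hz, map_div₀, v.map_pow, ht]
      exact div_self (hrpos x).ne'
    obtain ⟨b, hb1, hb2⟩ := hperf z hvz.le
    have hvtb : v (t * b) ≤ ρ x := by
      rw [v.map_mul, hvt]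
      exact mul_le_of_le_one_right' hb1
    have hx' : v (x.1 + t * b) ≤ 1 :=
      le_trans (v.map_add _ _) (max_le x.2 (hvtb.trans (hρ1 x)))
    refine ⟨⟨x.1 + t * b, hx'⟩, ?_, ?_⟩
    · simpa using hvtb
    · have heq : y - (x.1 + t * b) ^ p
          = t ^ p * (z - b ^ p)
            - ((x.1 + t * b) ^ p - x.1 ^ p - (t * b) ^ p) := by
        have : t ^ p * z = y - x.1 ^ p := by
          rw [hz]
          field_simp
        rw [mul_sub, this, mul_pow]; ring
      have h1 : v (t ^ p * (z - b ^ p)) < r x := by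
        rw [v.map_mul, v.map_pow, ht]
        exact mul_lt_of_lt_one_right (hrpos x) hb2
      have h2 : v ((x.1 + t * b) ^ p - x.1 ^ p - (t * b) ^ p) < r x :=
        lt_of_le_of_lt (v_pow_diff v hp _ _ x.2 (hvtb.trans (hρ1 x)))
          (lt_of_le_of_lt hϖp (hrlt x))
      calc r ⟨x.1 + t * b, hx'⟩ = v (y - (x.1 + t * b) ^ p) := rfl
        _ ≤ max (v (t ^ p * (z - b ^ p)))
              (v ((x.1 + t * b) ^ p - x.1 ^ p - (t * b) ^ p)) := by
            rw [heq]; exact v.map_sub _ _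
        _ < r x := max_lt h1 h2
  -- Zorn
  set R : α → α → Prop := fun x x' => r x' ≤ r x ∧ v (x'.1 - x.1) ≤ ρ x with hR
  have hne : Nonempty α := ⟨⟨0, by simp⟩⟩
  have htrans : ∀ {a b c : α}, R a b → R b c → R a c := by
    intro a b c ⟨h1, h2⟩ ⟨h3, h4⟩
    refine ⟨h3.trans h1, ?_⟩
    have : c.1 - a.1 = (c.1 - b.1) + (b.1 - a.1) := by ring
    rw [this]
    exact le_trans (v.map_add _ _) (max_le (h4.trans (hρmono _ _ h1)) h2)
  have hchain : ∀ c : Set α, IsChain R c → ∃ ub, ∀ a ∈ c, R a ub := by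
    intro c hc
    rcases Set.eq_empty_or_nonempty c with hce | ⟨x₀, hx₀⟩
    · exact ⟨Classical.arbitrary α, by simp [hce]⟩
    · set 𝒞 : Set (Set K) := (fun x : α => {w : K | v (w - x.1) ≤ ρ x}) '' c with h𝒞
      have hballs : ∀ B ∈ 𝒞, ∃ (cc : K) (rr : NNReal), B = {w : K | v (w - cc) ≤ rr} := by
        rintro B ⟨x, _, rfl⟩
        exact ⟨x.1, ρ x, rfl⟩
      have hsub : ∀ x x' : α, R x x' → {w : K | v (w - x'.1) ≤ ρ x'} ⊆ {w : K | v (w - x.1) ≤ ρ x} := by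
        intro x x' ⟨h1, h2⟩ w hw
        have : w - x.1 = (w - x'.1) + (x'.1 - x.1) := by ring
        simp only [Set.mem_setOf_eq] at hw ⊢
        rw [this]
        exact le_trans (v.map_add _ _) (max_le (hw.trans (hρmono _ _ h1)) h2)
      have hCchain : IsChain (· ⊆ ·) 𝒞 := by
        rintro B1 ⟨x1, hx1, rfl⟩ B2 ⟨x2, hx2, rfl⟩ hne12
        have hx12 : x1 ≠ x2 := fun h => hne12 (by rw [h])
        rcases hc hx1 hx2 hx12 with h | h
        · exact Or.inr (hsub _ _ h)
        · exact Or.inl (hsub _ _ h)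
      obtain ⟨w, hw⟩ := hsc 𝒞 hballs hCchain
      have hwmem : ∀ x ∈ c, v (w - x.1) ≤ ρ x := by
        intro x hx
        exact hw _ ⟨x, hx, rfl⟩
      have hw1 : v w ≤ 1 := by
        have : w = (w - x₀.1) + x₀.1 := by ring
        rw [this]
        exact le_trans (v.map_add _ _) (max_le ((hwmem x₀ hx₀).trans (hρ1 x₀)) x₀.2)
      refine ⟨⟨w, hw1⟩, fun x hx => ⟨key x ⟨w, hw1⟩ (hwmem x hx), hwmem x hx⟩⟩
  obtain ⟨m, hm⟩ := exists_maximal_of_chains_bounded hchain htrans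
  obtain ⟨x', hx'1, hx'2⟩ := improve m
  exact absurd ((hm x' ⟨hx'2.le, hx'1⟩).1) (not_le.2 hx'2)
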